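/- For every x ∈ ℝ³, the determinant of the 3×3 matrix with columns F₀(x), F₁(x), F₀₁(x) equals c₃c₅c₇²x₃; consequently F₀(x), F₁(x), F₀₁(x) are linearly independent (span ℝ³) if and only if x₃ ≠ 0. -/

import Mathlib

noncomputable section

/-- Lie bracket of vector fields on ℝ³: `[F,G](x) = G'(x)F(x) − F'(x)G(x)`. -/
def lieBracket (F G : (Fin 3 → ℝ) → (Fin 3 → ℝ)) (x : Fin 3 → ℝ) : Fin 3 → ℝ :=
  fderiv ℝ G x (F x) - fderiv ℝ F x (G x)

/-- Drift vector field of the electric vehicle. -/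
def F0 (c1 c2 c3 c4 c5 c6 : ℝ) (x : Fin 3 → ℝ) : Fin 3 → ℝ :=
  ![c1 * x 0 + c2 * x 2, c3 * x 2, c4 + c5 * x 0 + c6 * (x 2) ^ 2]

/-- Control vector field of the electric vehicle. -/
def F1 (c7 : ℝ) (_x : Fin 3 → ℝ) : Fin 3 → ℝ := ![c7, 0, 0]


def pr (i : Fin 3) : (Fin 3 → ℝ) →L[ℝ] ℝ := ContinuousLinearMap.proj i

lemma hasFDerivAt_F0 (c1 c2 c3 c4 c5 c6 : ℝ) (x : Fin 3 → ℝ) :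
    HasFDerivAt (F0 c1 c2 c3 c4 c5 c6)
      (ContinuousLinearMap.pi
        ![c1 • pr 0 + c2 • pr 2, c3 • pr 2,
          c5 • pr 0 + (2 * c6 * x 2) • pr 2]) x := by
  rw [hasFDerivAt_pi']
  intro i
  fin_cases i
  · have : HasFDerivAt (fun y : Fin 3 → ℝ => c1 * y 0 + c2 * y 2)
        (c1 • pr 0 + c2 • pr 2) x := by
      exact ((hasFDerivAt_apply 0 x).const_mul c1).add ((hasFDerivAt_apply 2 x).const_mul c2)
    refine (this.congr_fderiv ?_).congr_of_eventuallyEq (Filter.Eventually.of_forall fun y => ?_)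
    · ext y; simp [F0]
    · simp [F0]
  · have : HasFDerivAt (fun y : Fin 3 → ℝ => c3 * y 2)
        (c3 • pr 2) x :=
      (hasFDerivAt_apply 2 x).const_mul c3
    refine (this.congr_fderiv ?_).congr_of_eventuallyEq (Filter.Eventually.of_forall fun y => ?_)
    · ext y; simp [F0]
    · simp [F0]
  · have : HasFDerivAt (fun y : Fin 3 → ℝ => c4 + c5 * y 0 + c6 * y 2 ^ 2)
        (c5 • pr 0 + (2 * c6 * x 2) • pr 2) x := by
      have h1 : HasFDerivAt (fun y : Fin 3 → ℝ => c4 + c5 * y 0)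
          (c5 • pr 0) x :=
        ((hasFDerivAt_apply 0 x).const_mul c5).const_add c4
      have h2 : HasFDerivAt (fun y : Fin 3 → ℝ => c6 * y 2 ^ 2)
          ((2 * c6 * x 2) • pr 2) x := by
        have hp := hasFDerivAt_apply (𝕜 := ℝ) 2 x
        have := (hp.mul hp).const_mul c6
        refine (this.congr_fderiv ?_).congr_of_eventuallyEq (Filter.Eventually.of_forall fun y => ?_)
        · ext y; simp [pr]; ring
        · simp only [Pi.mul_apply]; ring
      exact h1.add h2
    refine (this.congr_fderiv ?_).congr_of_eventuallyEq (Filter.Eventually.of_forall fun y => ?_)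
    · ext y; simp [F0]
    · simp [F0]

lemma lie_eq (c1 c2 c3 c4 c5 c6 c7 : ℝ) (x : Fin 3 → ℝ) :
    lieBracket (F0 c1 c2 c3 c4 c5 c6) (F1 c7) x = ![-(c1 * c7), 0, -(c5 * c7)] := by
  have hd := (hasFDerivAt_F0 c1 c2 c3 c4 c5 c6 x).fderiv
  have h1 : fderiv ℝ (F1 c7) x = 0 := fderiv_const_apply _
  unfold lieBracket
  rw [hd, h1]
  ext i
  fin_cases i <;> simp [F1, pr]

theorem stmt2 (c1 c2 c3 c4 c5 c6 c7 : ℝ)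
    (h1 : c1 < 0) (h2 : c2 < 0) (h3 : 0 < c3) (h4 : c4 < 0)
    (h5 : 0 < c5) (h6 : c6 < 0) (h7 : 0 < c7) (x : Fin 3 → ℝ) :
    (Matrix.of fun i j =>
        (![F0 c1 c2 c3 c4 c5 c6 x, F1 c7 x,
           lieBracket (F0 c1 c2 c3 c4 c5 c6) (F1 c7) x] : Fin 3 → Fin 3 → ℝ) j i).det
      = c3 * c5 * c7 ^ 2 * x 2 ∧
    (LinearIndependent ℝ
        ![F0 c1 c2 c3 c4 c5 c6 x, F1 c7 x,
          lieBracket (F0 c1 c2 c3 c4 c5 c6) (F1 c7) x] ↔ x 2 ≠ 0) ∧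
    (Submodule.span ℝ
        (Set.range
          ![F0 c1 c2 c3 c4 c5 c6 x, F1 c7 x,
            lieBracket (F0 c1 c2 c3 c4 c5 c6) (F1 c7) x]) = ⊤ ↔ x 2 ≠ 0) := by
  have hlie := lie_eq c1 c2 c3 c4 c5 c6 c7 x
  set v : Fin 3 → Fin 3 → ℝ :=
    ![F0 c1 c2 c3 c4 c5 c6 x, F1 c7 x, lieBracket (F0 c1 c2 c3 c4 c5 c6) (F1 c7) x] with hv
  have hc : (c3 * c5 * c7 ^ 2 : ℝ) ≠ 0 := by positivity
  have hdet : (Matrix.of fun i j => v j i).det = c3 * c5 * c7 ^ 2 * x 2 := by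
    rw [Matrix.det_fin_three]
    simp [hv, hlie, F0, F1, Matrix.vecHead, Matrix.vecTail]
    ring
  have hdet' : (Matrix.of v).det = c3 * c5 * c7 ^ 2 * x 2 := by
    rw [← Matrix.det_transpose]
    exact hdet
  have hunit : IsUnit (Matrix.of v) ↔ x 2 ≠ 0 := by
    rw [Matrix.isUnit_iff_isUnit_det, isUnit_iff_ne_zero, hdet']
    constructor
    · intro h hx; exact h (by rw [hx, mul_zero])
    · intro h; exact mul_ne_zero hc h
  refine ⟨hdet, ?_, ?_⟩
  · rw [show v = fun i => (Matrix.of v) i from rfl] -- rows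
    exact Matrix.linearIndependent_rows_iff_isUnit.trans hunit
  · rw [show Set.range v = Set.range (Matrix.of v).row from rfl,
      ← range_vecMulLinear, LinearMap.range_eq_top]
    rw [show (⇑(Matrix.of v).vecMulLinear : _) = (Matrix.of v).vecMul from rfl]
    exact Matrix.vecMul_surjective_iff_isUnit.trans hunit
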